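/- If n is a coset leader of its coset with wt(n) ≥ 1, then there exists a standard basis vector e_i and a vector n' with n = n' + e_i such that n' is a coset leader of its own coset and wt(n') = wt(n) − 1. -/

import Mathlib

lemma norm_add_single_le (n : ℕ) (v : Fin n → ZMod 2) (i : Fin n) :
    hammingNorm (v + Pi.single i 1) ≤ hammingNorm v + 1 := by
  have h := hammingDist_triangle (v + Pi.single i 1) v 0
  rw [hammingDist_zero_right, hammingDist_zero_right, hammingDist_eq_hammingNorm] at h
  have he : (v + Pi.single i 1) - v = Pi.single i 1 := by abel
  rw [show -(v + Pi.single i 1) + v = Pi.single i 1 by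
    funext j; simp only [Pi.add_apply, Pi.neg_apply]
    generalize v j = a; generalize (Pi.single i 1 : Fin n → ZMod 2) j = b; revert a b; decide] at h
  have h1 : hammingNorm (Pi.single i 1 : Fin n → ZMod 2) ≤ 1 := by
    unfold hammingNorm
    have : (Finset.univ.filter fun j => (Pi.single i 1 : Fin n → ZMod 2) j ≠ 0) ⊆ {i} := by
      intro j hj
      simp only [Finset.mem_filter, Finset.mem_univ, true_and, Finset.mem_singleton] at *
      by_contra h'
      exact hj (by simp [Pi.single_apply, h'])
    simpa using Finset.card_le_card this
  omega

lemma zmod2_ne_zero : ∀ x : ZMod 2, x ≠ 0 → x = 1 := by decide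

theorem coset_leader_descend (n : ℕ) (C : Submodule (ZMod 2) (Fin n → ZMod 2))
    (n₀ : Fin n → ZMod 2)
    (hlead : ∀ v : Fin n → ZMod 2, v - n₀ ∈ C → hammingNorm n₀ ≤ hammingNorm v)
    (hw : 1 ≤ hammingNorm n₀) :
    ∃ (i : Fin n) (n' : Fin n → ZMod 2),
      n₀ = n' + Pi.single i 1 ∧
      (∀ v : Fin n → ZMod 2, v - n' ∈ C → hammingNorm n' ≤ hammingNorm v) ∧
      hammingNorm n' = hammingNorm n₀ - 1 := by
  have hne : n₀ ≠ 0 := by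
    intro h; rw [h] at hw; simp [hammingNorm] at hw
  obtain ⟨i, hi⟩ := Function.ne_iff.mp hne
  rw [Pi.zero_apply] at hi
  have hi1 : n₀ i = 1 := zmod2_ne_zero _ hi
  have heq : n₀ = Function.update n₀ i 0 + Pi.single i 1 := by
    funext j
    by_cases h : j = i
    · subst h; simp [hi1]
    · simp [Function.update_of_ne h, Pi.single_apply, h]
  have hcard : hammingNorm (Function.update n₀ i 0) = hammingNorm n₀ - 1 := by
    unfold hammingNorm
    have : (Finset.univ.filter fun j => Function.update n₀ i 0 j ≠ 0) =
        (Finset.univ.filter fun j => n₀ j ≠ 0).erase i := by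
      ext j
      by_cases h : j = i <;> simp [h, Function.update_of_ne]
    rw [this, Finset.card_erase_of_mem (by simp [hi])]
  refine ⟨i, Function.update n₀ i 0, heq, ?_, hcard⟩
  intro v hv
  have hmem : (v + Pi.single i 1) - n₀ ∈ C := by
    have : (v + Pi.single i 1) - n₀ = v - Function.update n₀ i 0 := by
      conv_lhs => rw [heq]
      abel
    rw [this]; exact hv
  have h1 := hlead _ hmem
  have h2 := norm_add_single_le n v i
  omega
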